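/- arXiv:2211.14783 — 5 statements merged into one kernel-verified Lean document; each statement's English description precedes it below -/
import Mathlib

section
/- Let s : ℝⁿ → ℝ and f : ℝⁿ → ℂ be twice differentiable at a point x, let V : ℝⁿ → ℝ, and set c₁ = −ℏ²/(2m), b_c = −iℏ/(2m) with ℏ, m > 0. Define the non-Hermitian Hamiltonian Ĥ^(ri) by Ĥ^(ri)f = c₁ Δf + V f + c₁ |∇s|² f − iℏ b_c (2 ∇s·∇f + f Δs). Then iℏ ŵ^(ri) f (x) := s(x)·(Ĥ^(ri)f)(x) − Ĥ^(ri)(s·f)(x) = −c₁ (2 ∇s(x)·∇f(x) + f(x) Δs(x) + 2 |∇s(x)|² f(x)), i.e. the G-dynamics of type II is ŵ^(ri) = b_c (2∇s·∇ + Δs + 2|∇s|²). -/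
open Filter

/-- Partial derivative of a function on `ℝⁿ` in the `i`-th coordinate direction. -/
noncomputable def pd {n : ℕ} {E : Type*} [NormedAddCommGroup E] [NormedSpace ℝ E]
    (g : (Fin n → ℝ) → E) (i : Fin n) (x : Fin n → ℝ) : E :=
  fderiv ℝ g x (Pi.single i 1)

/-- The non-Hermitian Hamiltonian
`Ĥ⁽ʳⁱ⁾f = c₁Δf + Vf + c₁|∇s|²f − iℏ b_c (2∇s·∇f + fΔs)`,
with `c₁ = −ℏ²/(2m)` and `b_c = −iℏ/(2m)`. -/
noncomputable def Hri {n : ℕ} (ℏ m : ℝ) (s V : (Fin n → ℝ) → ℝ)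
    (f : (Fin n → ℝ) → ℂ) (x : Fin n → ℝ) : ℂ :=
  ((-ℏ ^ 2 / (2 * m) : ℝ) : ℂ) * (∑ i, pd (pd f i) i x) + (V x : ℂ) * f x
    + ((-ℏ ^ 2 / (2 * m) : ℝ) : ℂ) * ((∑ i, (pd s i x) ^ 2 : ℝ) : ℂ) * f x
    - Complex.I * (ℏ : ℂ) * (-Complex.I * ℏ / (2 * m)) *
        (2 * ∑ i, ((pd s i x : ℝ) : ℂ) * pd f i x
          + f x * ((∑ i, pd (pd s i) i x : ℝ) : ℂ))

-- product rule
lemma pd_mul {n : ℕ} (s : (Fin n → ℝ) → ℝ) (f : (Fin n → ℝ) → ℂ) (i : Fin n)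
    (y : Fin n → ℝ) (hsy : DifferentiableAt ℝ s y) (hfy : DifferentiableAt ℝ f y) :
    pd (fun z => (s z : ℂ) * f z) i y
      = (s y : ℂ) * pd f i y + ((pd s i y : ℝ) : ℂ) * f y := by
  have hc : DifferentiableAt ℝ (fun z => ((s z : ℝ) : ℂ)) y :=
    Complex.ofRealCLM.differentiableAt.comp y hsy
  have hfd : fderiv ℝ (fun z => ((s z : ℝ) : ℂ)) y
      = Complex.ofRealCLM.comp (fderiv ℝ s y) := by
    rw [show (fun z => ((s z : ℝ) : ℂ)) = Complex.ofRealCLM ∘ s from rfl,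
      fderiv_comp y Complex.ofRealCLM.differentiableAt hsy,
      ContinuousLinearMap.fderiv]
  unfold pd
  rw [fderiv_fun_mul hc hfy]
  simp [hfd, smul_eq_mul, mul_comm]

-- differentiability of pd
lemma pd_diff {n : ℕ} {E : Type*} [NormedAddCommGroup E] [NormedSpace ℝ E]
    (f : (Fin n → ℝ) → E) (i : Fin n) (x : Fin n → ℝ)
    (hf' : DifferentiableAt ℝ (fderiv ℝ f) x) :
    DifferentiableAt ℝ (pd f i) x := by
  have := ((ContinuousLinearMap.apply ℝ E (Pi.single i 1)).differentiableAt).comp x hf'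
  exact this

lemma pd_ofReal {n : ℕ} (u : (Fin n → ℝ) → ℝ) (i : Fin n) (x : Fin n → ℝ)
    (hu : DifferentiableAt ℝ u x) :
    pd (fun z => ((u z : ℝ) : ℂ)) i x = ((pd u i x : ℝ) : ℂ) := by
  unfold pd
  rw [show (fun z => ((u z : ℝ) : ℂ)) = Complex.ofRealCLM ∘ u from rfl,
    fderiv_comp x Complex.ofRealCLM.differentiableAt hu,
    ContinuousLinearMap.fderiv]
  simp

lemma pd2_mul {n : ℕ} (s : (Fin n → ℝ) → ℝ) (f : (Fin n → ℝ) → ℂ) (i : Fin n)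
    (x : Fin n → ℝ)
    (hs : ∀ᶠ y in nhds x, DifferentiableAt ℝ s y)
    (hs' : DifferentiableAt ℝ (fderiv ℝ s) x)
    (hf : ∀ᶠ y in nhds x, DifferentiableAt ℝ f y)
    (hf' : DifferentiableAt ℝ (fderiv ℝ f) x) :
    pd (pd (fun z => (s z : ℂ) * f z) i) i x
      = 2 * ((pd s i x : ℝ) : ℂ) * pd f i x + (s x : ℂ) * pd (pd f i) i x
        + ((pd (pd s i) i x : ℝ) : ℂ) * f x := by
  have hsx : DifferentiableAt ℝ s x := hs.self_of_nhds
  have hfx : DifferentiableAt ℝ f x := hf.self_of_nhds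
  have heq : pd (fun z => (s z : ℂ) * f z) i
      =ᶠ[nhds x] fun y => (s y : ℂ) * pd f i y + ((pd s i y : ℝ) : ℂ) * f y := by
    filter_upwards [hs, hf] with y hsy hfy using pd_mul s f i y hsy hfy
  have hdsc : DifferentiableAt ℝ (fun z => ((s z : ℝ) : ℂ)) x :=
    Complex.ofRealCLM.differentiableAt.comp x hsx
  have hdpf : DifferentiableAt ℝ (pd f i) x := pd_diff f i x hf'
  have hdps : DifferentiableAt ℝ (pd s i) x := pd_diff s i x hs'
  have hdpsc : DifferentiableAt ℝ (fun z => ((pd s i z : ℝ) : ℂ)) x :=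
    Complex.ofRealCLM.differentiableAt.comp x hdps
  have h1 : DifferentiableAt ℝ (fun y => (s y : ℂ) * pd f i y) x := hdsc.mul hdpf
  have h2 : DifferentiableAt ℝ (fun y => ((pd s i y : ℝ) : ℂ) * f y) x := hdpsc.mul hfx
  have e1 : fderiv ℝ (fun z => ((s z : ℝ) : ℂ)) x (Pi.single i 1) = ((pd s i x : ℝ) : ℂ) :=
    pd_ofReal s i x hsx
  have e2 : fderiv ℝ (fun z => ((pd s i z : ℝ) : ℂ)) x (Pi.single i 1)
      = ((pd (pd s i) i x : ℝ) : ℂ) := pd_ofReal (pd s i) i x hdps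
  show fderiv ℝ (pd (fun z => (s z : ℂ) * f z) i) x (Pi.single i 1) = _
  rw [heq.fderiv_eq, fderiv_fun_add h1 h2]
  simp only [ContinuousLinearMap.add_apply]
  rw [fderiv_fun_mul hdsc hdpf, fderiv_fun_mul hdpsc hfx]
  simp only [ContinuousLinearMap.add_apply, ContinuousLinearMap.smul_apply, smul_eq_mul]
  rw [e1, e2]
  show (s x : ℂ) * pd (pd f i) i x + pd f i x * ((pd s i x : ℝ) : ℂ)
      + (((pd s i x : ℝ) : ℂ) * pd f i x + f x * ((pd (pd s i) i x : ℝ) : ℂ)) = _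
  ring

/-- The G-dynamics of type II:
`iℏ ŵ⁽ʳⁱ⁾f (x) = s(x)(Ĥ⁽ʳⁱ⁾f)(x) − Ĥ⁽ʳⁱ⁾(sf)(x)
  = −c₁(2∇s(x)·∇f(x) + f(x)Δs(x) + 2|∇s(x)|²f(x))`. -/
theorem stmt_5 (n : ℕ) (s V : (Fin n → ℝ) → ℝ) (f : (Fin n → ℝ) → ℂ) (x : Fin n → ℝ)
    (hs : ∀ᶠ y in nhds x, DifferentiableAt ℝ s y)
    (hs' : DifferentiableAt ℝ (fderiv ℝ s) x)
    (hf : ∀ᶠ y in nhds x, DifferentiableAt ℝ f y)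
    (hf' : DifferentiableAt ℝ (fderiv ℝ f) x)
    (ℏ m : ℝ) (hℏ : 0 < ℏ) (hm : 0 < m) :
    (s x : ℂ) * Hri ℏ m s V f x - Hri ℏ m s V (fun y => (s y : ℂ) * f y) x
      = -((-ℏ ^ 2 / (2 * m) : ℝ) : ℂ) *
          (2 * ∑ i, ((pd s i x : ℝ) : ℂ) * pd f i x
            + f x * ((∑ i, pd (pd s i) i x : ℝ) : ℂ)
            + 2 * ((∑ i, (pd s i x) ^ 2 : ℝ) : ℂ) * f x) := by
  have hA : (∑ i, pd (pd (fun y => (s y : ℂ) * f y) i) i x)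
      = (s x : ℂ) * (∑ i, pd (pd f i) i x)
        + 2 * (∑ i, ((pd s i x : ℝ) : ℂ) * pd f i x)
        + f x * ∑ i, ((pd (pd s i) i x : ℝ) : ℂ) := by
    rw [Finset.sum_congr rfl (fun i _ => pd2_mul s f i x hs hs' hf hf')]
    simp only [Finset.sum_add_distrib, mul_assoc, ← Finset.mul_sum, ← Finset.sum_mul]
    ring
  have hB : (∑ i, ((pd s i x : ℝ) : ℂ) * pd (fun y => (s y : ℂ) * f y) i x)
      = (s x : ℂ) * (∑ i, ((pd s i x : ℝ) : ℂ) * pd f i x)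
        + (∑ i, (((pd s i x : ℝ) : ℂ)) ^ 2) * f x := by
    rw [Finset.sum_congr rfl
      (fun i _ => by rw [pd_mul s f i x hs.self_of_nhds hf.self_of_nhds])]
    simp only [mul_add]
    rw [Finset.sum_add_distrib, Finset.mul_sum, Finset.sum_mul]
    congr 1
    · exact Finset.sum_congr rfl fun i _ => by ring
    · exact Finset.sum_congr rfl fun i _ => by ring
  simp only [Hri]
  push_cast
  rw [hA, hB]
  ring_nf
  simp only [Complex.I_sq]
  ring
end

section
/- Let ℏ, m > 0, b_c = −iℏ/(2m), a_c = ℏ/m, let u : ℝ → ℝ be continuously differentiable with u(x) > 0 for all x, and let w ∈ ℝ, C₀ ∈ ℂ, x₀ ∈ ℝ. Define ψ(x) = C₀ u(x)^{−1/2} exp( i (w/a_c) ∫_{x₀}^{x} u(t)^{−1} dt ). Then ψ is an eigenfunction of the one-dimensional G-dynamics of type I with eigenvalue w, i.e. b_c (2 u(x) ψ'(x) + u'(x) ψ(x)) = w ψ(x) for all x ∈ ℝ. -/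
open intervalIntegral

/-- `ψ(x) = C₀ u(x)^{−1/2} exp(i(w/a_c)∫_{x₀}^x u⁻¹)` is an eigenfunction of the
one-dimensional G-dynamics of type I `ŵ⁽ᶜˡ⁾ψ = b_c(2uψ' + u'ψ)` with eigenvalue `w`. -/
theorem stmt_9 (ℏ m : ℝ) (hℏ : 0 < ℏ) (hm : 0 < m)
    (b_c : ℂ) (hb_c : b_c = -Complex.I * ℏ / (2 * m))
    (a_c : ℝ) (ha_c : a_c = ℏ / m)
    (u : ℝ → ℝ) (hu : ContDiff ℝ 1 u) (hupos : ∀ x, 0 < u x)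
    (w : ℝ) (C₀ : ℂ) (x₀ : ℝ) (ψ : ℝ → ℂ)
    (hψ : ψ = fun x => C₀ * (((u x) ^ (-(1 / 2 : ℝ)) : ℝ) : ℂ) *
      Complex.exp (Complex.I * ((w / a_c : ℝ) : ℂ) * ((∫ t in x₀..x, (u t)⁻¹ : ℝ) : ℂ))) :
    ∀ x : ℝ, b_c * (2 * (u x : ℂ) * deriv ψ x + ((deriv u x : ℝ) : ℂ) * ψ x) = (w : ℂ) * ψ x := by
  intro x
  have hux : 0 < u x := hupos x
  have hune : ∀ t, u t ≠ 0 := fun t => (hupos t).ne'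
  set c : ℂ := Complex.I * ((w / a_c : ℝ) : ℂ) with hc
  -- derivative of the integral
  have hcont : Continuous fun t => (u t)⁻¹ := hu.continuous.inv₀ hune
  have hF : HasDerivAt (fun y => (∫ t in x₀..y, (u t)⁻¹ : ℝ)) (u x)⁻¹ x :=
    (hcont.integral_hasStrictDerivAt x₀ x).hasDerivAt
  -- derivative of u
  have hu' : HasDerivAt u (deriv u x) x := (hu.differentiable one_ne_zero x).hasDerivAt
  -- derivative of the rpow part
  have hr : HasDerivAt (fun y => (u y) ^ (-(1 / 2 : ℝ)))
      (deriv u x * (-(1 / 2 : ℝ)) * u x ^ (-(1 / 2 : ℝ) - 1)) x :=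
    hu'.rpow_const (Or.inl hux.ne')
  have hrC : HasDerivAt (fun y => (((u y) ^ (-(1 / 2 : ℝ)) : ℝ) : ℂ))
      ((deriv u x * (-(1 / 2 : ℝ)) * u x ^ (-(1 / 2 : ℝ) - 1) : ℝ) : ℂ) x := hr.ofReal_comp
  -- derivative of the exponential part
  have hg : HasDerivAt (fun y => c * ((∫ t in x₀..y, (u t)⁻¹ : ℝ) : ℂ))
      (c * ((u x)⁻¹ : ℝ)) x := (hF.ofReal_comp).const_mul c
  have hE := hg.cexp
  set E : ℂ := Complex.exp (c * ((∫ t in x₀..x, (u t)⁻¹ : ℝ) : ℂ)) with hEdef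
  -- derivative of ψ
  have hψd : HasDerivAt ψ
      ((C₀ * ((deriv u x * (-(1 / 2 : ℝ)) * u x ^ (-(1 / 2 : ℝ) - 1) : ℝ) : ℂ)) * E
        + (C₀ * (((u x) ^ (-(1 / 2 : ℝ)) : ℝ) : ℂ)) * (E * (c * ((u x)⁻¹ : ℝ)))) x := by
    rw [hψ]
    exact (hrC.const_mul C₀).mul hE
  rw [hψd.deriv, hψ]
  -- key algebraic identities
  have hkey : ((u x : ℝ) : ℂ) * ((u x ^ (-(1 / 2 : ℝ) - 1) : ℝ) : ℂ)
      = (((u x) ^ (-(1 / 2 : ℝ)) : ℝ) : ℂ) := by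
    rw [← Complex.ofReal_mul]
    congr 1
    rw [show (-(1 / 2 : ℝ)) = (-(1 / 2 : ℝ) - 1) + 1 by ring, Real.rpow_add hux,
      Real.rpow_one]
    ring
  have hUinv : ((u x : ℝ) : ℂ) * (((u x)⁻¹ : ℝ) : ℂ) = 1 := by
    rw [← Complex.ofReal_mul, mul_inv_cancel₀ (hune x)]; simp
  have hbc : b_c * (2 * c) = (w : ℂ) := by
    rw [hb_c, hc, ha_c]
    have h1 : (ℏ : ℂ) ≠ 0 := Complex.ofReal_ne_zero.mpr hℏ.ne'
    have h2 : (m : ℂ) ≠ 0 := Complex.ofReal_ne_zero.mpr hm.ne'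
    have h3 : (w / (ℏ / m) : ℝ) = w * m / ℏ := div_div_eq_mul_div w ℏ m
    rw [h3]
    push_cast
    field_simp
    linear_combination (-(w : ℂ)) * Complex.I_mul_I
  -- finish
  set R : ℂ := (((u x) ^ (-(1 / 2 : ℝ)) : ℝ) : ℂ)
  set R3 : ℂ := ((u x ^ (-(1 / 2 : ℝ) - 1) : ℝ) : ℂ)
  set U : ℂ := ((u x : ℝ) : ℂ)
  set V : ℂ := (((u x)⁻¹ : ℝ) : ℂ)
  have hsplit : ((deriv u x * (-(1 / 2 : ℝ)) * u x ^ (-(1 / 2 : ℝ) - 1) : ℝ) : ℂ)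
      = ((deriv u x : ℝ) : ℂ) * (-(1 / 2 : ℂ)) * R3 := by push_cast; ring
  rw [hsplit]
  linear_combination (-(b_c * ((deriv u x : ℝ) : ℂ) * C₀ * E)) * hkey
    + (2 * b_c * C₀ * R * E * c) * hUinv + (C₀ * R * E) * hbc
end

section
/- Let ℏ, m > 0, a_c = ℏ/m, let u : ℝ → ℝ be twice continuously differentiable with u(x) > 0 for all x, and let w ∈ ℝ, C₀ ∈ ℂ, x₀ ∈ ℝ. Define ψ(x) = C₀ u(x)^{−1/2} exp( i (w/a_c) ∫_{x₀}^{x} u(t)^{−1} dt ). Then for all x ∈ ℝ, −ψ''(x) = ( w²/(a_c² u(x)²) + 2i w u'(x)/(a_c u(x)²) − (3/4) u'(x)²/u(x)² + (1/2) u''(x)/u(x) ) ψ(x). -/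
open intervalIntegral

set_option maxHeartbeats 1200000 in
/-- Second derivative of the eigenfunction `ψ` of the one-dimensional G-dynamics of
type I: `−ψ'' = (w²/(a_c²u²) + 2iwu'/(a_cu²) − (3/4)u'²/u² + (1/2)u''/u)ψ`. -/
theorem stmt_11 (ℏ m : ℝ) (hℏ : 0 < ℏ) (hm : 0 < m)
    (a_c : ℝ) (ha_c : a_c = ℏ / m)
    (u : ℝ → ℝ) (hu : ContDiff ℝ 2 u) (hupos : ∀ x, 0 < u x)
    (w : ℝ) (C₀ : ℂ) (x₀ : ℝ) (ψ : ℝ → ℂ)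
    (hψ : ψ = fun x => C₀ * (((u x) ^ (-(1 / 2 : ℝ)) : ℝ) : ℂ) *
      Complex.exp (Complex.I * ((w / a_c : ℝ) : ℂ) * ((∫ t in x₀..x, (u t)⁻¹ : ℝ) : ℂ))) :
    ∀ x : ℝ, -deriv (deriv ψ) x =
      (((w ^ 2 / (a_c ^ 2 * (u x) ^ 2) : ℝ) : ℂ)
        + 2 * Complex.I * ((w * deriv u x / (a_c * (u x) ^ 2) : ℝ) : ℂ)
        - ((3 / 4 * (deriv u x) ^ 2 / (u x) ^ 2 : ℝ) : ℂ)
        + ((1 / 2 * deriv (deriv u) x / u x : ℝ) : ℂ)) * ψ x := by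
  have hune : ∀ x, u x ≠ 0 := fun x => (hupos x).ne'
  have hac : a_c ≠ 0 := by
    rw [ha_c]; positivity
  have hucont : Continuous u := hu.continuous
  have hicont : Continuous (fun t => (u t)⁻¹) := hucont.inv₀ hune
  set k : ℝ := w / a_c with hk
  -- u differentiable
  have hud : Differentiable ℝ u := hu.differentiable (by norm_num)
  have hud2 : Differentiable ℝ (deriv u) := (hu.iterate_deriv' 1 1).differentiable (by norm_num)
  -- g
  set g : ℝ → ℂ := fun x => ((-(1/2) * deriv u x / u x : ℝ) : ℂ)
      + Complex.I * ((k / u x : ℝ) : ℂ) with hg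
  have hF : ∀ x, HasDerivAt (fun y => ∫ t in x₀..y, (u t)⁻¹) (u x)⁻¹ x := by
    intro x
    exact intervalIntegral.integral_hasDerivAt_right
      (hicont.intervalIntegrable _ _)
      hicont.stronglyMeasurable.stronglyMeasurableAtFilter
      hicont.continuousAt
  have hψ' : ∀ x, HasDerivAt ψ (g x * ψ x) x := by
    intro x
    have hr : HasDerivAt (fun y => u y ^ (-(1/2 : ℝ)))
        (deriv u x * (-(1/2 : ℝ)) * u x ^ (-(1/2 : ℝ) - 1)) x :=
      (hud x).hasDerivAt.rpow_const (Or.inl (hune x))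
    have hE : HasDerivAt (fun y => Complex.exp (Complex.I * (k : ℂ) * ((∫ t in x₀..y, (u t)⁻¹ : ℝ) : ℂ)))
        ((Complex.I * (k : ℂ) * ((u x)⁻¹ : ℝ)) *
          Complex.exp (Complex.I * (k : ℂ) * ((∫ t in x₀..x, (u t)⁻¹ : ℝ) : ℂ))) x := by
      have h1 : HasDerivAt (fun y => Complex.I * (k : ℂ) * ((∫ t in x₀..y, (u t)⁻¹ : ℝ) : ℂ))
          (Complex.I * (k : ℂ) * ((u x)⁻¹ : ℝ)) x := ((hF x).ofReal_comp).const_mul _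
      simpa [mul_comm] using h1.cexp
    have hA : HasDerivAt (fun y => C₀ * ((u y ^ (-(1/2 : ℝ)) : ℝ) : ℂ))
        (C₀ * ((deriv u x * (-(1/2 : ℝ)) * u x ^ (-(1/2 : ℝ) - 1) : ℝ) : ℂ)) x :=
      (hr.ofReal_comp).const_mul C₀
    have := hA.mul hE
    rw [hψ]
    refine this.congr_deriv ?_
    -- algebraic identity
    have hrpow : (u x) ^ (-(1/2 : ℝ) - 1) = (u x) ^ (-(1/2 : ℝ)) / u x := by
      rw [Real.rpow_sub (hupos x), Real.rpow_one]
    rw [hg, hrpow]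
    push_cast
    field_simp
  have hdψ : deriv ψ = fun x => g x * ψ x := funext fun x => (hψ' x).deriv
  -- derivative of g
  have hg' : ∀ x, HasDerivAt g
      (((-(1/2) * (deriv (deriv u) x * u x - deriv u x * deriv u x) / (u x)^2 : ℝ) : ℂ)
        + Complex.I * ((-(k * deriv u x) / (u x)^2 : ℝ) : ℂ)) x := by
    intro x
    have h1 : HasDerivAt (fun y => -(1/2) * deriv u y / u y)
        ((-(1/2) * deriv (deriv u) x * u x - -(1/2) * deriv u x * deriv u x) / (u x)^2) x :=
      (((hud2 x).hasDerivAt.const_mul (-(1/2) : ℝ)).div (hud x).hasDerivAt (hune x))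
    have h2 : HasDerivAt (fun y => k / u y)
        ((0 * u x - k * deriv u x) / (u x)^2) x :=
      (hasDerivAt_const x k).div (hud x).hasDerivAt (hune x)
    have := (h1.ofReal_comp).add (((h2.ofReal_comp)).const_mul Complex.I)
    refine this.congr_deriv ?_
    push_cast
    ring
  intro x
  have hdd : HasDerivAt (deriv ψ)
      ((((-(1/2) * (deriv (deriv u) x * u x - deriv u x * deriv u x) / (u x)^2 : ℝ) : ℂ)
        + Complex.I * ((-(k * deriv u x) / (u x)^2 : ℝ) : ℂ)) * ψ x
        + g x * (g x * ψ x)) x := by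
    rw [hdψ]
    exact (hg' x).mul (hψ' x)
  rw [hdd.deriv]
  have hux := hune x
  have hco : -((((-(1/2) * (deriv (deriv u) x * u x - deriv u x * deriv u x) / (u x)^2 : ℝ) : ℂ)
        + Complex.I * ((-(k * deriv u x) / (u x)^2 : ℝ) : ℂ)) + g x * g x) =
      (((w ^ 2 / (a_c ^ 2 * (u x) ^ 2) : ℝ) : ℂ)
        + 2 * Complex.I * ((w * deriv u x / (a_c * (u x) ^ 2) : ℝ) : ℂ)
        - ((3 / 4 * (deriv u x) ^ 2 / (u x) ^ 2 : ℝ) : ℂ)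
        + ((1 / 2 * deriv (deriv u) x / u x : ℝ) : ℂ)) := by
    rw [hg]
    simp only [hk]
    apply Complex.ext <;>
      simp only [Complex.add_re, Complex.add_im, Complex.sub_re, Complex.sub_im,
        Complex.neg_re, Complex.neg_im, Complex.mul_re, Complex.mul_im,
        Complex.I_re, Complex.I_im, Complex.ofReal_re, Complex.ofReal_im,
        Complex.re_ofNat, Complex.im_ofNat, mul_zero, zero_mul, mul_one, one_mul,
        sub_zero, zero_sub, add_zero, zero_add, neg_zero, neg_neg] <;>
      · field_simp
        ring
  calc -((((-(1/2) * (deriv (deriv u) x * u x - deriv u x * deriv u x) / (u x)^2 : ℝ) : ℂ)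
        + Complex.I * ((-(k * deriv u x) / (u x)^2 : ℝ) : ℂ)) * ψ x + g x * (g x * ψ x))
      = -((((-(1/2) * (deriv (deriv u) x * u x - deriv u x * deriv u x) / (u x)^2 : ℝ) : ℂ)
        + Complex.I * ((-(k * deriv u x) / (u x)^2 : ℝ) : ℂ)) + g x * g x) * ψ x := by ring
    _ = _ := by rw [hco]
end

section
/- Let ℏ, m > 0, b_c = −iℏ/(2m), a_c = ℏ/m, c_m = −2m/ℏ, let u : ℝ → ℝ be twice continuously differentiable with u(x) > 0 for all x, and let w ∈ ℝ, C₀ ∈ ℂ, x₀ ∈ ℝ. Define ψ(x) = C₀ u(x)^{−1/2} exp( i (w/a_c) ∫_{x₀}^{x} u(t)^{−1} dt ). Then ψ satisfies the eigenvalue equation of the generalized Laplacian −ψ''(x) + i c_m · b_c (2u(x)ψ'(x) + u'(x)ψ(x)) = β(x) ψ(x) for all x, where β(x) = u(x)^{−2} ( w²/a_c² − (3/4) u'(x)² + (1/2) u(x) u''(x) ) + i ( 2 w u'(x)/(a_c u(x)²) − (2m/ℏ) w ). -/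
set_option maxHeartbeats 1000000


open intervalIntegral

/-- The eigenfunction `ψ` of the G-dynamics of type I satisfies the eigenvalue
equation `−ψ'' + i c_m ŵ⁽ᶜˡ⁾ψ = βψ` of the generalized Laplacian of type I, with
`β(x) = u⁻²(w²/a_c² − (3/4)u'² + (1/2)uu'') + i(2wu'/(a_cu²) − (2m/ℏ)w)`. -/
theorem stmt_12 (ℏ m : ℝ) (hℏ : 0 < ℏ) (hm : 0 < m)
    (b_c : ℂ) (hb_c : b_c = -Complex.I * ℏ / (2 * m))
    (a_c : ℝ) (ha_c : a_c = ℏ / m)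
    (c_m : ℝ) (hc_m : c_m = -2 * m / ℏ)
    (u : ℝ → ℝ) (hu : ContDiff ℝ 2 u) (hupos : ∀ x, 0 < u x)
    (w : ℝ) (C₀ : ℂ) (x₀ : ℝ) (ψ : ℝ → ℂ)
    (hψ : ψ = fun x => C₀ * (((u x) ^ (-(1 / 2 : ℝ)) : ℝ) : ℂ) *
      Complex.exp (Complex.I * ((w / a_c : ℝ) : ℂ) * ((∫ t in x₀..x, (u t)⁻¹ : ℝ) : ℂ)))
    (β : ℝ → ℂ)
    (hβ : β = fun x =>
      (((((u x) ^ 2)⁻¹ * (w ^ 2 / a_c ^ 2 - 3 / 4 * (deriv u x) ^ 2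
          + 1 / 2 * u x * deriv (deriv u) x) : ℝ)) : ℂ)
        + Complex.I * ((2 * w * deriv u x / (a_c * (u x) ^ 2) - 2 * m / ℏ * w : ℝ) : ℂ)) :
    ∀ x : ℝ, -deriv (deriv ψ) x
        + Complex.I * (c_m : ℂ) *
          (b_c * (2 * (u x : ℂ) * deriv ψ x + ((deriv u x : ℝ) : ℂ) * ψ x))
      = β x * ψ x := by
  subst hb_c hc_m ha_c hβ hψ
  have hune : ∀ y, u y ≠ 0 := fun y => (hupos y).ne'
  have hicont : Continuous fun t => (u t)⁻¹ := hu.continuous.inv₀ hune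
  set k : ℂ := ((w / (ℏ / m) : ℝ) : ℂ) with hk
  set F : ℝ → ℝ := fun s => ∫ t in x₀..s, (u t)⁻¹ with hFdef
  set E : ℝ → ℂ := fun y => Complex.exp (Complex.I * k * (F y : ℂ)) with hEdef
  have hF : ∀ y, HasDerivAt F (u y)⁻¹ y := fun y =>
    intervalIntegral.integral_hasDerivAt_right (hicont.intervalIntegrable _ _)
      hicont.aestronglyMeasurable.stronglyMeasurableAtFilter hicont.continuousAt
  have hE : ∀ y, HasDerivAt E (E y * (Complex.I * k * ((u y)⁻¹ : ℝ))) y := fun y => by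
    exact (((hF y).ofReal_comp).const_mul (Complex.I * k)).cexp
  have hu1 : ∀ y, HasDerivAt u (deriv u y) y := fun y =>
    ((hu.differentiable two_ne_zero) y).hasDerivAt
  have hu2cd : ContDiff ℝ 1 (deriv u) := by
    have : (2 : WithTop ℕ∞) = 1 + 1 := by norm_num
    exact (contDiff_succ_iff_deriv.mp (this ▸ hu)).2.2
  have hu2 : ∀ y, HasDerivAt (deriv u) (deriv (deriv u) y) y := fun y =>
    ((hu2cd.differentiable one_ne_zero) y).hasDerivAt
  have hG : ∀ y, HasDerivAt (fun s => (u s) ^ (-(1 / 2 : ℝ)))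
      (deriv u y * (-(1 / 2 : ℝ)) * u y ^ (-(1 / 2 : ℝ) - 1)) y := fun y =>
    (hu1 y).rpow_const (Or.inl (hune y))
  -- first derivative of ψ
  set D : ℝ → ℂ := fun y =>
    (C₀ * ((deriv u y * (-(1 / 2 : ℝ)) * u y ^ (-(1 / 2 : ℝ) - 1) : ℝ) : ℂ)
      + C₀ * (((u y) ^ (-(1 / 2 : ℝ)) : ℝ) : ℂ) * (Complex.I * k * ((u y)⁻¹ : ℝ))) * E y
    with hDdef
  have hψ' : ∀ y, HasDerivAt (fun x => C₀ * (((u x) ^ (-(1 / 2 : ℝ)) : ℝ) : ℂ) *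
      Complex.exp (Complex.I * ((w / (ℏ / m) : ℝ) : ℂ) * ((∫ t in x₀..x, (u t)⁻¹ : ℝ) : ℂ))) (D y) y := fun y => by
    have h := (((hG y).ofReal_comp).const_mul C₀).mul (hE y)
    refine h.congr_deriv ?_
    simp only [D]
    push_cast
    ring
  have hdψ : deriv (fun x => C₀ * (((u x) ^ (-(1 / 2 : ℝ)) : ℝ) : ℂ) *
      Complex.exp (Complex.I * ((w / (ℏ / m) : ℝ) : ℂ) * ((∫ t in x₀..x, (u t)⁻¹ : ℝ) : ℂ))) = D :=
    funext fun y => (hψ' y).deriv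
  intro x
  -- second derivative
  have hinv : HasDerivAt (fun y => (((u y)⁻¹ : ℝ) : ℂ))
      ((-(deriv u x) / (u x) ^ 2 : ℝ) : ℂ) x := ((hu1 x).inv (hune x)).ofReal_comp
  have hg1 : HasDerivAt (fun y => C₀ * ((deriv u y * (-(1 / 2 : ℝ)) * u y ^ (-(1 / 2 : ℝ) - 1) : ℝ) : ℂ))
      (C₀ * ((deriv (deriv u) x * (-(1 / 2 : ℝ)) * u x ^ (-(1 / 2 : ℝ) - 1)
        + deriv u x * (-(1 / 2 : ℝ)) * (deriv u x * (-(1 / 2 : ℝ) - 1) * u x ^ (-(1 / 2 : ℝ) - 1 - 1)) : ℝ) : ℂ)) x := by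
    have h : HasDerivAt (fun y => deriv u y * (-(1 / 2 : ℝ)) * u y ^ (-(1 / 2 : ℝ) - 1))
        (deriv (deriv u) x * (-(1 / 2 : ℝ)) * u x ^ (-(1 / 2 : ℝ) - 1)
          + deriv u x * (-(1 / 2 : ℝ)) * (deriv u x * (-(1 / 2 : ℝ) - 1) * u x ^ (-(1 / 2 : ℝ) - 1 - 1))) x :=
      ((hu2 x).mul_const _).mul ((hu1 x).rpow_const (Or.inl (hune x)))
    exact (h.ofReal_comp).const_mul C₀
  have hg2 : HasDerivAt (fun y => C₀ * (((u y) ^ (-(1 / 2 : ℝ)) : ℝ) : ℂ) * (Complex.I * k * (((u y)⁻¹ : ℝ) : ℂ)))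
      ((C₀ * ((deriv u x * (-(1 / 2 : ℝ)) * u x ^ (-(1 / 2 : ℝ) - 1) : ℝ) : ℂ)) * (Complex.I * k * (((u x)⁻¹ : ℝ) : ℂ))
        + (C₀ * (((u x) ^ (-(1 / 2 : ℝ)) : ℝ) : ℂ)) * (Complex.I * k * ((-(deriv u x) / (u x) ^ 2 : ℝ) : ℂ))) x := by
    exact ((((hG x).ofReal_comp).const_mul C₀).mul ((hinv.const_mul (Complex.I * k))))
  have hD' : HasDerivAt D
      ((C₀ * ((deriv (deriv u) x * (-(1 / 2 : ℝ)) * u x ^ (-(1 / 2 : ℝ) - 1)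
          + deriv u x * (-(1 / 2 : ℝ)) * (deriv u x * (-(1 / 2 : ℝ) - 1) * u x ^ (-(1 / 2 : ℝ) - 1 - 1)) : ℝ) : ℂ)
        + ((C₀ * ((deriv u x * (-(1 / 2 : ℝ)) * u x ^ (-(1 / 2 : ℝ) - 1) : ℝ) : ℂ)) * (Complex.I * k * (((u x)⁻¹ : ℝ) : ℂ))
          + (C₀ * (((u x) ^ (-(1 / 2 : ℝ)) : ℝ) : ℂ)) * (Complex.I * k * ((-(deriv u x) / (u x) ^ 2 : ℝ) : ℂ)))) * E x
      + (C₀ * ((deriv u x * (-(1 / 2 : ℝ)) * u x ^ (-(1 / 2 : ℝ) - 1) : ℝ) : ℂ)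
          + C₀ * (((u x) ^ (-(1 / 2 : ℝ)) : ℝ) : ℂ) * (Complex.I * k * (((u x)⁻¹ : ℝ) : ℂ)))
        * (E x * (Complex.I * k * (((u x)⁻¹ : ℝ) : ℂ)))) x :=
    (hg1.add hg2).mul (hE x)
  rw [hdψ, hD'.deriv, hDdef]
  simp only [hEdef, hFdef, hk]
  have e1 : u x ^ (-(1 / 2 : ℝ) - 1) = u x ^ (-(1 / 2 : ℝ)) * (u x)⁻¹ := by
    rw [Real.rpow_sub (hupos x), Real.rpow_one, div_eq_mul_inv]
  have e2 : u x ^ (-(1 / 2 : ℝ) - 1 - 1) = u x ^ (-(1 / 2 : ℝ)) * ((u x)⁻¹ * (u x)⁻¹) := by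
    rw [Real.rpow_sub (hupos x), Real.rpow_sub (hupos x), Real.rpow_one, div_div,
      div_eq_mul_inv, mul_inv]
  rw [e1, e2]
  have hU : (u x : ℂ) ≠ 0 := by exact_mod_cast hune x
  have hℏ' : (ℏ : ℂ) ≠ 0 := by exact_mod_cast hℏ.ne'
  have hm' : (m : ℂ) ≠ 0 := by exact_mod_cast hm.ne'
  set V : ℝ := u x ^ (-(1 / 2 : ℝ)) with hV
  set Ex : ℂ := Complex.exp (Complex.I * ((w / (ℏ / m) : ℝ) : ℂ) * ((∫ t in x₀..x, (u t)⁻¹ : ℝ) : ℂ)) with hEx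
  clear_value V Ex
  push_cast
  field_simp [hU, hℏ', hm']
  ring_nf
  have hI3 : Complex.I ^ 3 = -Complex.I := by rw [pow_succ, Complex.I_sq, neg_one_mul]
  simp only [hI3, Complex.I_sq]
  have hA : C₀ * ((deriv u x : ℝ) : ℂ) * (V : ℂ) * (ℏ : ℂ) ^ 3 * ((u x : ℝ) : ℂ) ^ 5 * Complex.I * (w : ℂ) * (m : ℂ) * Ex * (((u x : ℝ) : ℂ))⁻¹ ^ 7 * ((ℏ : ℂ))⁻¹ ^ 4 * 2
      = C₀ * ((deriv u x : ℝ) : ℂ) * (V : ℂ) * (ℏ : ℂ) ^ 3 * ((u x : ℝ) : ℂ) ^ 2 * Complex.I * (w : ℂ) * (m : ℂ) * Ex * (((u x : ℝ) : ℂ))⁻¹ ^ 4 * ((ℏ : ℂ))⁻¹ ^ 4 * 2 := by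
    field_simp
  have hB : C₀ * ((deriv u x : ℝ) : ℂ) ^ 2 * (V : ℂ) * (ℏ : ℂ) ^ 4 * ((u x : ℝ) : ℂ) ^ 8 * Ex * (((u x : ℝ) : ℂ))⁻¹ ^ 10 * ((ℏ : ℂ))⁻¹ ^ 4 * (-3 / 4)
      = C₀ * ((deriv u x : ℝ) : ℂ) ^ 2 * (V : ℂ) * (ℏ : ℂ) ^ 4 * ((u x : ℝ) : ℂ) ^ 2 * Ex * (((u x : ℝ) : ℂ))⁻¹ ^ 4 * ((ℏ : ℂ))⁻¹ ^ 4 * (-3 / 4) := by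
    field_simp
  have hC : C₀ * (V : ℂ) * (ℏ : ℂ) * ((u x : ℝ) : ℂ) ^ 2 * Complex.I * (w : ℂ) * (m : ℂ) ^ 2 * Ex * (((u x : ℝ) : ℂ))⁻¹ ^ 2 * ((ℏ : ℂ))⁻¹ ^ 2 * ((m : ℂ))⁻¹ * 2
      = C₀ * (V : ℂ) * (ℏ : ℂ) ^ 3 * ((u x : ℝ) : ℂ) ^ 4 * Complex.I * (w : ℂ) * (m : ℂ) * Ex * (((u x : ℝ) : ℂ))⁻¹ ^ 4 * ((ℏ : ℂ))⁻¹ ^ 4 * 2 := by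
    field_simp
  have hD : C₀ * (V : ℂ) * (ℏ : ℂ) ^ 2 * ((u x : ℝ) : ℂ) ^ 5 * (w : ℂ) ^ 2 * (m : ℂ) ^ 2 * Ex * (((u x : ℝ) : ℂ))⁻¹ ^ 7 * ((ℏ : ℂ))⁻¹ ^ 4
      = C₀ * (V : ℂ) * (ℏ : ℂ) ^ 2 * ((u x : ℝ) : ℂ) ^ 2 * (w : ℂ) ^ 2 * (m : ℂ) ^ 2 * Ex * (((u x : ℝ) : ℂ))⁻¹ ^ 4 * ((ℏ : ℂ))⁻¹ ^ 4 := by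
    field_simp
  have hE2 : C₀ * (V : ℂ) * (ℏ : ℂ) ^ 4 * ((u x : ℝ) : ℂ) ^ 9 * Ex * (((u x : ℝ) : ℂ))⁻¹ ^ 10 * ((ℏ : ℂ))⁻¹ ^ 4 * ((deriv (deriv u) x : ℝ) : ℂ) * (1 / 2)
      = C₀ * (V : ℂ) * (ℏ : ℂ) ^ 4 * ((u x : ℝ) : ℂ) ^ 3 * Ex * (((u x : ℝ) : ℂ))⁻¹ ^ 4 * ((ℏ : ℂ))⁻¹ ^ 4 * ((deriv (deriv u) x : ℝ) : ℂ) * (1 / 2) := by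
    field_simp
  linear_combination (norm := skip) hA + hB - hC + hD + hE2
  field_simp
  ring
end

section
/- Let ℏ, m > 0, b_c = −iℏ/(2m), a_c = ℏ/m, c_m = −2m/ℏ, let u : ℝ → ℝ be twice continuously differentiable with u(x) > 0 for all x, and let w ∈ ℝ, C₀ ∈ ℂ, x₀ ∈ ℝ. Define ψ(x) = C₀ u(x)^{−1/2} exp( i (w/a_c) ∫_{x₀}^{x} u(t)^{−1} dt ). Then ψ satisfies the eigenvalue equation of the generalized Laplacian of type II: −ψ''(x) + i c_m · b_c ( 2u(x)ψ'(x) + u'(x)ψ(x) + 2u(x)² ψ(x) ) = β^(II)(x) ψ(x) for all x, where β^(II)(x) = u(x)^{−2} ( w²/a_c² − (3/4) u'(x)² + (1/2) u(x) u''(x) ) − 2u(x)² + i ( 2 w u'(x)/(a_c u(x)²) − (2m/ℏ) w ). In particular β^(II)(x) = β(x) − 2u(x)², where β is the eigenvalue of the generalized Laplacian of type I. -/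
open intervalIntegral

private lemma key_alg (a b c k : ℝ) (z : ℂ) (ha : a ≠ 0) :
    -(z * (((-(1/2) * (b / a) : ℝ) : ℂ) + Complex.I * ((k : ℝ) : ℂ) * (((a⁻¹ : ℝ)) : ℂ))
        * (((-(1/2) * (b / a) : ℝ) : ℂ) + Complex.I * ((k : ℝ) : ℂ) * (((a⁻¹ : ℝ)) : ℂ))
      + z * (((-(1/2) * ((c * a - b * b) / a ^ 2) : ℝ) : ℂ)
        + Complex.I * ((k : ℝ) : ℂ) * ((-b / a ^ 2 : ℝ) : ℂ)))
    + -(2 * ((a : ℝ) : ℂ) * (z * (((-(1/2) * (b / a) : ℝ) : ℂ)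
        + Complex.I * ((k : ℝ) : ℂ) * (((a⁻¹ : ℝ)) : ℂ)))
      + ((b : ℝ) : ℂ) * z + 2 * ((a ^ 2 : ℝ) : ℂ) * z)
    = (((((a ^ 2)⁻¹ * (k ^ 2 - 3 / 4 * b ^ 2 + 1 / 2 * a * c) : ℝ)) : ℂ) - ((2 * a ^ 2 : ℝ) : ℂ)
        + Complex.I * ((2 * k * b / a ^ 2 - 2 * k : ℝ) : ℂ)) * z := by
  have hac : ((a : ℝ) : ℂ) ≠ 0 := Complex.ofReal_ne_zero.mpr ha
  push_cast
  field_simp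
  ring_nf
  simp only [Complex.I_sq]
  field_simp
  ring

/-- The eigenfunction `ψ` of the G-dynamics of type I satisfies the eigenvalue
equation `−ψ'' + i c_m ŵ⁽ʳⁱ⁾ψ = β⁽ᴵᴵ⁾ψ` of the generalized Laplacian of type II,
where `β⁽ᴵᴵ⁾ = u⁻²(w²/a_c² − (3/4)u'² + (1/2)uu'') − 2u²
 + i(2wu'/(a_cu²) − (2m/ℏ)w)`; in particular `β⁽ᴵᴵ⁾(x) = β(x) − 2u(x)²`, with `β`
the eigenvalue of the generalized Laplacian of type I. -/
theorem stmt_15 (ℏ m : ℝ) (hℏ : 0 < ℏ) (hm : 0 < m)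
    (b_c : ℂ) (hb_c : b_c = -Complex.I * ℏ / (2 * m))
    (a_c : ℝ) (ha_c : a_c = ℏ / m)
    (c_m : ℝ) (hc_m : c_m = -2 * m / ℏ)
    (u : ℝ → ℝ) (hu : ContDiff ℝ 2 u) (hupos : ∀ x, 0 < u x)
    (w : ℝ) (C₀ : ℂ) (x₀ : ℝ) (ψ : ℝ → ℂ)
    (hψ : ψ = fun x => C₀ * (((u x) ^ (-(1 / 2 : ℝ)) : ℝ) : ℂ) *
      Complex.exp (Complex.I * ((w / a_c : ℝ) : ℂ) * ((∫ t in x₀..x, (u t)⁻¹ : ℝ) : ℂ)))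
    (β : ℝ → ℂ)
    (hβ : β = fun x =>
      (((((u x) ^ 2)⁻¹ * (w ^ 2 / a_c ^ 2 - 3 / 4 * (deriv u x) ^ 2
          + 1 / 2 * u x * deriv (deriv u) x) : ℝ)) : ℂ)
        + Complex.I * ((2 * w * deriv u x / (a_c * (u x) ^ 2) - 2 * m / ℏ * w : ℝ) : ℂ))
    (βII : ℝ → ℂ)
    (hβII : βII = fun x =>
      (((((u x) ^ 2)⁻¹ * (w ^ 2 / a_c ^ 2 - 3 / 4 * (deriv u x) ^ 2
          + 1 / 2 * u x * deriv (deriv u) x) : ℝ)) : ℂ) - ((2 * (u x) ^ 2 : ℝ) : ℂ)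
        + Complex.I * ((2 * w * deriv u x / (a_c * (u x) ^ 2) - 2 * m / ℏ * w : ℝ) : ℂ)) :
    (∀ x : ℝ, -deriv (deriv ψ) x
        + Complex.I * (c_m : ℂ) *
          (b_c * (2 * (u x : ℂ) * deriv ψ x + ((deriv u x : ℝ) : ℂ) * ψ x
            + 2 * (((u x) ^ 2 : ℝ) : ℂ) * ψ x))
      = βII x * ψ x) ∧
    (∀ x : ℝ, βII x = β x - ((2 * (u x) ^ 2 : ℝ) : ℂ)) := by
  constructor
  · -- main part
    have hane : ∀ x, u x ≠ 0 := fun x => (hupos x).ne'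
    have hu1 : Differentiable ℝ u := hu.differentiable two_ne_zero
    have hu2 : Differentiable ℝ (deriv u) := by
      have h := (contDiff_succ_iff_deriv.mp (show ContDiff ℝ (1+1) u from hu)).2.2
      exact h.differentiable one_ne_zero
    set k : ℝ := w / a_c with hk
    set F : ℝ → ℝ := fun x => ∫ t in x₀..x, (u t)⁻¹ with hF
    have hcont : Continuous fun t => (u t)⁻¹ := hu.continuous.inv₀ hane
    have hFd : ∀ x, HasDerivAt F ((u x)⁻¹) x := fun x =>
      intervalIntegral.integral_hasDerivAt_right (hcont.intervalIntegrable _ _)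
        (hcont.stronglyMeasurableAtFilter _ _) hcont.continuousAt
    set g : ℝ → ℂ := fun x => ((-(1/2) * Real.log (u x) : ℝ) : ℂ) + Complex.I * ((k : ℝ) : ℂ) * ((F x : ℝ) : ℂ)
      with hg
    have hψg : ψ = fun x => C₀ * Complex.exp (g x) := by
      funext x
      rw [hψ]
      have h1 : ((u x) ^ (-(1/2 : ℝ)) : ℝ) = Real.exp (-(1/2) * Real.log (u x)) := by
        rw [Real.rpow_def_of_pos (hupos x)]; ring_nf
      simp only [hg, h1, Complex.ofReal_exp, Complex.exp_add, hk]
      ring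
    set G : ℝ → ℂ := fun x => ((-(1/2) * (deriv u x / u x) : ℝ) : ℂ)
        + Complex.I * ((k : ℝ) : ℂ) * (((u x)⁻¹ : ℝ) : ℂ) with hG
    have hgd : ∀ x, HasDerivAt g (G x) x := by
      intro x
      have h1 : HasDerivAt (fun y => Real.log (u y)) (deriv u x / u x) x :=
        ((hu1 x).hasDerivAt).log (hane x)
      have h2 := (h1.const_mul (-(1/2) : ℝ)).ofReal_comp
      have h3 := ((hFd x).ofReal_comp).const_mul (Complex.I * ((k : ℝ) : ℂ))
      exact h2.add h3
    have hψd : ∀ x, HasDerivAt ψ (ψ x * G x) x := by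
      intro x
      have h := ((hgd x).cexp).const_mul C₀
      have hval : ψ x * G x = C₀ * (Complex.exp (g x) * G x) := by
        rw [hψg]; ring
      rw [hval, hψg]
      exact h
    have hderiv1 : deriv ψ = fun x => ψ x * G x := funext fun x => (hψd x).deriv
    set G' : ℝ → ℂ := fun x =>
        ((-(1/2) * ((deriv (deriv u) x * u x - deriv u x * deriv u x) / (u x) ^ 2) : ℝ) : ℂ)
        + Complex.I * ((k : ℝ) : ℂ) * ((-(deriv u x) / (u x) ^ 2 : ℝ) : ℂ) with hG'
    have hGd : ∀ x, HasDerivAt G (G' x) x := by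
      intro x
      have h1 : HasDerivAt (fun y => deriv u y / u y)
          ((deriv (deriv u) x * u x - deriv u x * deriv u x) / (u x) ^ 2) x :=
        ((hu2 x).hasDerivAt).div ((hu1 x).hasDerivAt) (hane x)
      have h2 := (h1.const_mul (-(1/2) : ℝ)).ofReal_comp
      have h3' : HasDerivAt (fun y => (u y)⁻¹) (-(deriv u x) / (u x) ^ 2) x :=
        ((hu1 x).hasDerivAt).inv (hane x)
      have h3 := (h3'.ofReal_comp).const_mul (Complex.I * ((k : ℝ) : ℂ))
      exact h2.add h3
    have hψdd : ∀ x, deriv (deriv ψ) x = ψ x * G x * G x + ψ x * G' x := by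
      intro x
      rw [hderiv1]
      exact ((hψd x).mul (hGd x)).deriv
    have hI : Complex.I * (c_m : ℂ) * b_c = -1 := by
      rw [hb_c, hc_m]
      have h1 : (ℏ : ℂ) ≠ 0 := Complex.ofReal_ne_zero.mpr hℏ.ne'
      have h2 : (m : ℂ) ≠ 0 := Complex.ofReal_ne_zero.mpr hm.ne'
      push_cast
      field_simp
      linear_combination Complex.I_sq
    have hacne : a_c ≠ 0 := by rw [ha_c]; positivity
    have hwk : w = k * a_c := by rw [hk]; field_simp
    intro x
    rw [hψdd x]
    simp only [hderiv1, hβII]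
    have hIc : Complex.I * (c_m : ℂ) *
        (b_c * (2 * (u x : ℂ) * (ψ x * G x) + ((deriv u x : ℝ) : ℂ) * ψ x
          + 2 * (((u x) ^ 2 : ℝ) : ℂ) * ψ x))
        = -(2 * (u x : ℂ) * (ψ x * G x) + ((deriv u x : ℝ) : ℂ) * ψ x
          + 2 * (((u x) ^ 2 : ℝ) : ℂ) * ψ x) := by
      calc Complex.I * (c_m : ℂ) * (b_c * (2 * (u x : ℂ) * (ψ x * G x)
          + ((deriv u x : ℝ) : ℂ) * ψ x + 2 * (((u x) ^ 2 : ℝ) : ℂ) * ψ x))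
          = (Complex.I * (c_m : ℂ) * b_c) * (2 * (u x : ℂ) * (ψ x * G x)
          + ((deriv u x : ℝ) : ℂ) * ψ x + 2 * (((u x) ^ 2 : ℝ) : ℂ) * ψ x) := by ring
        _ = _ := by rw [hI]; ring
    rw [hIc]
    have hwmk : 2 * m / ℏ * w = 2 * k := by
      rw [hwk, ha_c]; field_simp [hℏ.ne', hm.ne']; try ring
    have hwu : 2 * w * deriv u x / (a_c * (u x) ^ 2) = 2 * k * deriv u x / (u x) ^ 2 := by
      rw [hwk]; field_simp [hacne, hane x]; try ring
    have hw2 : w ^ 2 / a_c ^ 2 = k ^ 2 := by rw [hwk]; field_simp [hacne]; try ring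
    rw [hwmk, hwu, hw2, hG, hG']
    exact key_alg (u x) (deriv u x) (deriv (deriv u) x) k (ψ x) (hane x)
  · intro x
    rw [hβ, hβII]
    push_cast
    ring
end
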